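/- For an affine permutation w̃ of size n, define ish(w̃) as follows: let ũ be the affine permutation whose window [ũ(1),...,ũ(n)] is the increasing rearrangement of [w̃(1),...,w̃(n)]; then ish(w̃) = max_{1≤i≤n} w̃(i) − n. -/

import Mathlib

private lemma gauss_aux (k : ℕ) :
    2 * ∑ r ∈ Finset.Icc (0:ℤ) ((k:ℤ) - 1), r = (k:ℤ) * ((k:ℤ) - 1) := by
  induction k with
  | zero => simp
  | succ m ih =>
    have h1 : Finset.Icc (0:ℤ) (((m:ℤ)+1) - 1) = insert (m:ℤ) (Finset.Icc (0:ℤ) ((m:ℤ)-1)) := by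
      ext x
      simp only [Finset.mem_Icc, Finset.mem_insert]
      omega
    have h2 : (m:ℤ) ∉ Finset.Icc (0:ℤ) ((m:ℤ)-1) := by
      simp only [Finset.mem_Icc]; omega
    push_cast
    rw [h1, Finset.sum_insert h2]
    push_cast at ih
    ring_nf
    ring_nf at ih
    linarith

theorem ish_eq_max_sub_n (n : ℕ) (hn : 1 ≤ n) (f u : Equiv.Perm ℤ)
    (hf1 : ∀ k : ℤ, f (k + n) = f k + n)
    (hf2 : ∑ i ∈ Finset.Icc (1 : ℤ) (n : ℤ), f i = n * (n + 1) / 2)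
    (hu1 : ∀ k : ℤ, u (k + n) = u k + n)
    (hu2 : ∑ i ∈ Finset.Icc (1 : ℤ) (n : ℤ), u i = n * (n + 1) / 2)
    (huinc : ∀ i j : ℤ, 1 ≤ i → i < j → j ≤ n → u i < u j)
    (hrearr : Multiset.map (⇑u) (Finset.Icc (1 : ℤ) (n : ℤ)).val
      = Multiset.map (⇑f) (Finset.Icc (1 : ℤ) (n : ℤ)).val) :
    (Nat.card {j : ℤ // (n : ℤ) < j ∧ u j < u (n : ℤ)} : ℤ)
      = (Finset.Icc (1 : ℤ) (n : ℤ)).sup'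
          (Finset.nonempty_Icc.mpr (by exact_mod_cast hn)) (⇑f) - n := by
  have hN : (1:ℤ) ≤ (n:ℤ) := by exact_mod_cast hn
  have hN0 : (0:ℤ) < (n:ℤ) := by linarith
  set N : ℤ := (n:ℤ) with hNdef
  -- shift property for all integer multiples
  have hu' : ∀ t k : ℤ, u (k + t * N) = u k + t * N := by
    intro t
    induction t using Int.induction_on with
    | zero => simp
    | succ m ih =>
      intro k
      have e : k + ((m:ℤ) + 1) * N = (k + (m:ℤ) * N) + N := by ring
      rw [e, hu1, ih k]; ring
    | pred m ih =>
      intro k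
      have e : (k + (-(m:ℤ) - 1) * N) + N = k + (-(m:ℤ)) * N := by ring
      have h1 := hu1 (k + (-(m:ℤ) - 1) * N)
      rw [e, ih k] at h1
      linarith
  set M : ℤ := u N with hM
  set m0 : ℤ := u 1 with hm0
  set K : ℤ := M - m0 with hK
  have hlt : ∀ i : ℤ, 1 ≤ i → i < N → u i < M := fun i h1 h2 => huinc i N h1 h2 le_rfl
  have hle : ∀ i : ℤ, 1 ≤ i → i ≤ N → u i ≤ M := by
    intro i h1 h2
    rcases eq_or_lt_of_le h2 with h | h
    · rw [h]
    · exact le_of_lt (hlt i h1 h)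
  have hmin : ∀ i : ℤ, 1 ≤ i → i ≤ N → m0 ≤ u i := by
    intro i h1 h2
    rcases eq_or_lt_of_le h1 with h | h
    · rw [← h]
    · exact le_of_lt (huinc 1 i le_rfl h h2)
  have hm0M : m0 ≤ M := hmin N hN le_rfl
  -- small arithmetic lemma
  have hsmall : ∀ i j t : ℤ, 1 ≤ i → i ≤ N → 1 ≤ j → j ≤ N → j - i = t * N → i = j ∧ t = 0 := by
    intro i j t hi1 hiN hj1 hjN ht
    rcases lt_trichotomy t 0 with h | h | h
    · exfalso
      have h2 : t * N ≤ (-1) * N :=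
        mul_le_mul_of_nonneg_right (by omega) (le_of_lt hN0)
      rw [neg_one_mul] at h2
      omega
    · rw [h, zero_mul] at ht
      exact ⟨by omega, h⟩
    · exfalso
      have h2 : 1 * N ≤ t * N :=
        mul_le_mul_of_nonneg_right (by omega) (le_of_lt hN0)
      rw [one_mul] at h2
      omega
  -- injectivity of residues
  have hinj : ∀ i j : ℤ, 1 ≤ i → i ≤ N → 1 ≤ j → j ≤ N →
      (M - u i) % N = (M - u j) % N → i = j := by
    intro i j hi1 hiN hj1 hjN h
    have hmod : (M - u i) ≡ (M - u j) [ZMOD N] := h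
    obtain ⟨t, ht⟩ := hmod.dvd
    have ht' : u i - u j = N * t := by linarith
    have hui : u i = u (j + t * N) := by rw [hu' t j]; linarith
    have hij : i = j + t * N := u.injective hui
    have := hsmall j i t hj1 hjN hi1 hiN (by linarith)
    omega
  -- the sup of f over the window equals M
  have hsupf : (Finset.Icc (1:ℤ) N).sup'
      (Finset.nonempty_Icc.mpr hN) (⇑f) = M := by
    apply le_antisymm
    · apply Finset.sup'_le
      intro i hi
      have h1 : f i ∈ Multiset.map (⇑f) (Finset.Icc (1:ℤ) N).val :=
        Multiset.mem_map_of_mem _ (Finset.mem_val.mpr hi)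
      rw [← hrearr] at h1
      obtain ⟨j, hj, hji⟩ := Multiset.mem_map.mp h1
      rw [Finset.mem_val, Finset.mem_Icc] at hj
      rw [← hji]
      exact hle j hj.1 hj.2
    · have h1 : M ∈ Multiset.map (⇑u) (Finset.Icc (1:ℤ) N).val := by
        rw [hM]
        exact Multiset.mem_map_of_mem _ (Finset.mem_val.mpr (by
          rw [Finset.mem_Icc]; exact ⟨hN, le_rfl⟩))
      rw [hrearr] at h1
      obtain ⟨j, hj, hji⟩ := Multiset.mem_map.mp h1
      rw [← hji]
      exact Finset.le_sup' (⇑f) (Finset.mem_val.mp hj)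
  rw [hsupf]
  -- the counting finsets
  set G : Finset (ℤ × ℤ) :=
    (Finset.Icc (1:ℤ) N ×ˢ Finset.Icc (1:ℤ) K).filter (fun p => u p.1 + p.2 * N < M)
    with hG
  set F : Finset ℤ := G.image (fun p => p.1 + p.2 * N) with hF
  -- membership characterization
  have hmem : ∀ j : ℤ, (N < j ∧ u j < M) ↔ j ∈ F := by
    intro j
    constructor
    · rintro ⟨hj1, hj2⟩
      set i : ℤ := (j - 1) % N + 1 with hi
      set t : ℤ := (j - 1) / N with ht
      have hdm : N * ((j-1)/N) + (j-1) % N = j - 1 := Int.mul_ediv_add_emod (j-1) N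
      have hji : j = i + t * N := by rw [hi, ht]; linarith
      have hi1 : 1 ≤ i := by
        have := Int.emod_nonneg (j-1) (ne_of_gt hN0); omega
      have hiN : i ≤ N := by
        have := Int.emod_lt_of_pos (j-1) hN0; omega
      have ht1 : 1 ≤ t := by
        rw [ht]
        rw [Int.le_ediv_iff_mul_le hN0]
        omega
      have huj : u j = u i + t * N := by rw [hji, hu' t i]
      have hlt2 : t * N < M - u i := by
        have := hj2; rw [huj] at this; linarith
      have htN : t * 1 ≤ t * N := mul_le_mul_of_nonneg_left hN (by omega)
      have htK : t ≤ K := by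
        have := hmin i hi1 hiN
        rw [hK]
        omega
      rw [hF, Finset.mem_image]
      refine ⟨(i, t), ?_, hji.symm⟩
      rw [hG, Finset.mem_filter, Finset.mem_product, Finset.mem_Icc, Finset.mem_Icc]
      exact ⟨⟨⟨hi1, hiN⟩, ⟨ht1, htK⟩⟩, by linarith⟩
    · intro hj
      rw [hF, Finset.mem_image] at hj
      obtain ⟨p, hp, hpj⟩ := hj
      rw [hG, Finset.mem_filter, Finset.mem_product, Finset.mem_Icc, Finset.mem_Icc] at hp
      obtain ⟨⟨⟨hi1, hiN⟩, ⟨ht1, htK⟩⟩, hlt2⟩ := hp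
      have huj : u (p.1 + p.2 * N) = u p.1 + p.2 * N := hu' p.2 p.1
      have htN : 1 * N ≤ p.2 * N := mul_le_mul_of_nonneg_right ht1 (le_of_lt hN0)
      constructor
      · omega
      · rw [← hpj, huj]; exact hlt2
  -- cardinality via F
  have hScard : Nat.card {j : ℤ // N < j ∧ u j < M} = F.card := by
    rw [Nat.card_congr (Equiv.subtypeEquivRight (fun j => hmem j))]
    exact Nat.card_eq_finsetCard F
  rw [hM] at hScard
  rw [hScard]
  -- F.card = G.card
  have hFG : F.card = G.card := by
    rw [hF]
    apply Finset.card_image_of_injOn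
    intro p hp q hq heq
    rw [hG, Finset.mem_coe, Finset.mem_filter, Finset.mem_product,
      Finset.mem_Icc, Finset.mem_Icc] at hp hq
    simp only at heq
    have h1 : q.1 - p.1 = (p.2 - q.2) * N := by ring_nf; linarith
    have := hsmall p.1 q.1 (p.2 - q.2) hp.1.1.1 hp.1.1.2 hq.1.1.1 hq.1.1.2 h1
    have hfst : p.1 = q.1 := this.1
    have hsnd : p.2 = q.2 := by omega
    exact Prod.ext hfst hsnd
  rw [hFG]
  -- fiberwise counting
  have hmemfib : ∀ p ∈ G, p.1 ∈ Finset.Icc (1:ℤ) N := by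
    intro p hp
    rw [hG, Finset.mem_filter, Finset.mem_product] at hp
    exact hp.1.1
  have hfiber : ∀ i ∈ Finset.Icc (1:ℤ) N, (G.filter fun p => p.1 = i).card
      = ((Finset.Icc (1:ℤ) K).filter (fun t => u i + t * N < M)).card := by
    intro i hi
    apply Finset.card_bij (fun p _ => p.2)
    · intro p hp
      rw [Finset.mem_filter] at hp
      obtain ⟨hpG, hp1⟩ := hp
      rw [hG, Finset.mem_filter, Finset.mem_product] at hpG
      rw [Finset.mem_filter]
      exact ⟨hpG.1.2, by rw [← hp1]; exact hpG.2⟩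
    · intro p hp q hq h
      rw [Finset.mem_filter] at hp hq
      exact Prod.ext (hp.2.trans hq.2.symm) h
    · intro t ht
      rw [Finset.mem_filter, Finset.mem_Icc] at ht
      refine ⟨(i, t), ?_, rfl⟩
      rw [Finset.mem_filter, hG, Finset.mem_filter, Finset.mem_product,
        Finset.mem_Icc, Finset.mem_Icc]
      rw [Finset.mem_Icc] at hi
      exact ⟨⟨⟨hi, ⟨ht.1.1, ht.1.2⟩⟩, ht.2⟩, rfl⟩
  have hfilter2 : ∀ i : ℤ, 1 ≤ i → i ≤ N →
      (Finset.Icc (1:ℤ) K).filter (fun t => u i + t * N < M)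
        = Finset.Icc (1:ℤ) ((M - u i - 1) / N) := by
    intro i h1 h2
    ext t
    rw [Finset.mem_filter, Finset.mem_Icc, Finset.mem_Icc]
    constructor
    · rintro ⟨⟨ht1, htK⟩, hltt⟩
      refine ⟨ht1, ?_⟩
      rw [Int.le_ediv_iff_mul_le hN0]
      linarith
    · rintro ⟨ht1, htc⟩
      have h3 : t * N ≤ M - u i - 1 := (Int.le_ediv_iff_mul_le hN0).mp htc
      have h4 : t * 1 ≤ t * N := mul_le_mul_of_nonneg_left hN (by omega)
      have h5 := hmin i h1 h2
      refine ⟨⟨ht1, ?_⟩, by linarith⟩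
      rw [hK]; omega
  have hGsum : G.card = ∑ i ∈ Finset.Icc (1:ℤ) N, ((M - u i - 1) / N).toNat := by
    rw [Finset.card_eq_sum_card_fiberwise hmemfib]
    apply Finset.sum_congr rfl
    intro i hi
    rw [Finset.mem_Icc] at hi
    rw [hfiber i (Finset.mem_Icc.mpr hi), hfilter2 i hi.1 hi.2, Int.card_Icc]
    omega
  rw [hGsum]
  -- arithmetic
  have hcard : (Finset.Icc (1:ℤ) N).card = n := by
    rw [Int.card_Icc]; omega
  have key : ∀ i ∈ Finset.Icc (1:ℤ) N,
      (((M - u i - 1) / N).toNat : ℤ) = (M - u i) / N := by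
    intro i hi
    rw [Finset.mem_Icc] at hi
    rcases eq_or_lt_of_le hi.2 with h | h
    · have hMM : M - u i = 0 := by rw [h, hM, sub_self]
      rw [hMM]
      have hneg : ((0:ℤ) - 1) / N < 0 := Int.ediv_neg_of_neg_of_pos (by norm_num) hN0
      simp only [Int.zero_ediv]
      omega
    · have hD1 : 1 ≤ M - u i := by have := hlt i hi.1 h; omega
      have hndvd : (M - u i) % N ≠ 0 := by
        intro h0
        have hzero : (M - u N) % N = 0 := by
          rw [hM]; simp
        have := hinj i N hi.1 (le_of_lt h) hN le_rfl (by rw [h0, hzero])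
        omega
      have hr0 : 0 ≤ (M - u i) % N := Int.emod_nonneg _ (ne_of_gt hN0)
      have hrN : (M - u i) % N < N := Int.emod_lt_of_pos _ hN0
      have hde : N * ((M - u i) / N) + (M - u i) % N = M - u i := Int.mul_ediv_add_emod _ N
      have he1 : M - u i - 1 = ((M - u i) % N - 1) + ((M - u i) / N) * N := by linarith
      have he2 : (M - u i - 1) / N = ((M - u i) % N - 1) / N + (M - u i) / N := by
        rw [he1, Int.add_mul_ediv_right _ _ (ne_of_gt hN0)]
      have he3 : ((M - u i) % N - 1) / N = 0 := Int.ediv_eq_zero_of_lt (by omega) (by omega)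
      have hge : 0 ≤ (M - u i) / N := Int.ediv_nonneg (by omega) (le_of_lt hN0)
      rw [he2, he3, zero_add]
      omega
  push_cast
  rw [Finset.sum_congr rfl key]
  -- residue sum
  have himg : (Finset.Icc (1:ℤ) N).image (fun i => (M - u i) % N)
      = Finset.Icc (0:ℤ) (N-1) := by
    apply Finset.eq_of_subset_of_card_le
    · intro r hr
      rw [Finset.mem_image] at hr
      obtain ⟨i, hi, rfl⟩ := hr
      rw [Finset.mem_Icc]
      refine ⟨Int.emod_nonneg _ (ne_of_gt hN0), ?_⟩
      have := Int.emod_lt_of_pos (M - u i) hN0; omega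
    · rw [Finset.card_image_of_injOn, Int.card_Icc, Int.card_Icc]
      · omega
      · intro a ha b hb hab
        rw [Finset.mem_coe, Finset.mem_Icc] at ha hb
        exact hinj a b ha.1 ha.2 hb.1 hb.2 hab
  have hinj2 : ∀ x ∈ Finset.Icc (1:ℤ) N, ∀ y ∈ Finset.Icc (1:ℤ) N,
      (M - u x) % N = (M - u y) % N → x = y := by
    intro a ha b hb hab
    rw [Finset.mem_Icc] at ha hb
    exact hinj a b ha.1 ha.2 hb.1 hb.2 hab
  have hres : ∑ i ∈ Finset.Icc (1:ℤ) N, (M - u i) % N = ∑ r ∈ Finset.Icc (0:ℤ) (N-1), r := by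
    rw [← himg, Finset.sum_image hinj2]
  have hg := gauss_aux n
  rw [← hNdef] at hg
  rw [← hres] at hg
  have hsum1 : ∑ i ∈ Finset.Icc (1:ℤ) N, (M - u i) = (n:ℕ) * M - N * (N+1) / 2 := by
    rw [Finset.sum_sub_distrib, Finset.sum_const, hcard, hu2, nsmul_eq_mul]
  obtain ⟨q, hq⟩ := (Int.even_mul_succ_self N).two_dvd
  have hq2 : N * (N + 1) / 2 = q := by rw [hq, Int.mul_ediv_cancel_left _ two_ne_zero]
  have hmul : N * (∑ i ∈ Finset.Icc (1:ℤ) N, (M - u i) / N) = N * (M - N) := by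
    rw [Finset.mul_sum]
    have hterm : ∀ i ∈ Finset.Icc (1:ℤ) N, N * ((M - u i) / N) = (M - u i) - (M - u i) % N := by
      intro i _
      have := Int.mul_ediv_add_emod (M - u i) N
      linarith
    rw [Finset.sum_congr rfl hterm, Finset.sum_sub_distrib, hsum1, hq2]
    have hNn : ((n:ℕ):ℤ) = N := rfl
    have hid : N * (N + 1) + (N * (N - 1)) = 2 * (N * N) := by ring
    have hgoal : N * (M - N) = N * M - N * N := by ring
    rw [hNn, hgoal]
    linarith
  exact mul_left_cancel₀ (ne_of_gt hN0) hmul
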